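/- arXiv:math/0212169 — 4 statements merged into one kernel-verified Lean document; each statement's English description precedes it below -/
import Mathlib

section
/- Reye's theorem (one direction): if Z = {[L₁],…,[L_s]} ⊂ ℙV* is a set of s distinct points and the degree-4 part (I_Z)_4 of its ideal is contained in ker α_{4,F}, then F lies in the linear span of L₁⁴, …, L_s⁴. -/
open MvPolynomial

/-- The differential operator on `MvPolynomial σ ℂ` given by the monomial with
exponent vector `m`: the composite of `m i`-fold partial derivatives in each variable `i`. -/
noncomputable def diffOpMon {σ : Type*} [Fintype σ] [DecidableEq σ] (m : σ →₀ ℕ) :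
    Module.End ℂ (MvPolynomial σ ℂ) :=
  (m.toMultiset.toList.map fun i => (pderiv i).toLinearMap).prod

/-- `diffOp D F` is the result of applying the polynomial `D` (in the dual variables)
to `F` as a constant-coefficient differential operator (apolarity action). -/
noncomputable def diffOp {σ : Type*} [Fintype σ] [DecidableEq σ]
    (D F : MvPolynomial σ ℂ) : MvPolynomial σ ℂ :=
  (AddMonoidAlgebra.coeff D).sum fun m c => c • diffOpMon m F

/-- The rank of the `k`-th catalecticant of `F`: the dimension of the space spanned by all
`D(∂)F` for `D` homogeneous of degree `k`. -/
noncomputable def cataRank {σ : Type*} [Fintype σ] [DecidableEq σ]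
    (k : ℕ) (F : MvPolynomial σ ℂ) : ℕ :=
  Module.finrank ℂ
    (Submodule.span ℂ ((fun D => diffOp D F) '' {D : MvPolynomial σ ℂ | D.IsHomogeneous k}))

/-! ### Auxiliary lemmas -/

lemma coeff_pderiv' (i : Fin 3) (k : Fin 3 →₀ ℕ) (f : MvPolynomial (Fin 3) ℂ) :
    coeff k (pderiv i f) = ((k i : ℂ) + 1) * coeff (k + Finsupp.single i 1) f := by
  induction f using MvPolynomial.induction_on' with
  | add f g hf hg => simp [map_add, coeff_add, hf, hg, mul_add]
  | monomial s a =>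
    rw [pderiv_monomial, coeff_monomial, coeff_monomial]
    by_cases h : s = k + Finsupp.single i 1
    · have h1 : s - Finsupp.single i 1 = k := by
        rw [h]; exact add_tsub_cancel_right _ _
      have h2 : s i = k i + 1 := by
        rw [h]; simp
      rw [if_pos h1, if_pos h, h2]
      push_cast
      ring
    · rw [if_neg h, mul_zero]
      by_cases h2 : s - Finsupp.single i 1 = k
      · rw [if_pos h2]
        have hs : s i = 0 := by
          by_contra hs
          apply h
          have hle : Finsupp.single i 1 ≤ s :=
            Finsupp.single_le_iff.mpr (Nat.one_le_iff_ne_zero.mpr hs)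
          rw [← h2, tsub_add_cancel_of_le hle]
        rw [hs]
        simp
      · rw [if_neg h2]

/-- The exponent vector counting occurrences in a list of variable indices. -/
noncomputable def cntL (l : List (Fin 3)) : Fin 3 →₀ ℕ :=
  (l.map fun i => Finsupp.single i 1).sum

lemma cntL_cons (i : Fin 3) (l : List (Fin 3)) :
    cntL (i :: l) = Finsupp.single i 1 + cntL l := by simp [cntL]

lemma cntL_count (l : List (Fin 3)) (j : Fin 3) : cntL l j = l.count j := by
  induction l with
  | nil => simp [cntL]
  | cons i t ih =>
    rw [cntL_cons, Finsupp.add_apply, ih, List.count_cons, Finsupp.single_apply]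
    by_cases h : i = j
    · subst h; simp [add_comm]
    · simp [h, beq_iff_eq, Ne.symm h]

lemma cntL_toList (m : Fin 3 →₀ ℕ) : cntL m.toMultiset.toList = m := by
  ext j
  rw [cntL_count, ← Multiset.coe_count, Multiset.coe_toList, Finsupp.count_toMultiset]

lemma coeff_prodPDeriv (l : List (Fin 3)) :
    ∀ (k : Fin 3 →₀ ℕ) (G : MvPolynomial (Fin 3) ℂ),
    ((∏ j, Nat.factorial (k j) : ℕ) : ℂ) *
        coeff k (((l.map fun i => (pderiv (R := ℂ) i).toLinearMap).prod) G)
      = ((∏ j, Nat.factorial ((k + cntL l) j) : ℕ) : ℂ) * coeff (k + cntL l) G := by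
  induction l with
  | nil => intro k G; simp [cntL]
  | cons i t ih =>
    intro k G
    set P := ((t.map fun i => (pderiv (R := ℂ) i).toLinearMap).prod) with hP
    have happ : (((i :: t).map fun i => (pderiv (R := ℂ) i).toLinearMap).prod) G
        = pderiv i (P G) := by
      rw [List.map_cons, List.prod_cons, Module.End.mul_apply]
      rfl
    set k' : Fin 3 →₀ ℕ := k + Finsupp.single i 1 with hk'
    have hfac : (∏ j, Nat.factorial (k' j))
        = (k i + 1) * ∏ j, Nat.factorial (k j) := by
      rw [← Finset.mul_prod_erase Finset.univ (fun j => (k' j).factorial)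
            (Finset.mem_univ i),
          ← Finset.mul_prod_erase Finset.univ (fun j => (k j).factorial) (Finset.mem_univ i),
          ← mul_assoc]
      have h1 : k' i = k i + 1 := by simp [hk']
      have h2 : ∀ j ∈ Finset.univ.erase i,
          Nat.factorial (k' j) = Nat.factorial (k j) := by
        intro j hj
        have hij : i ≠ j := Ne.symm (Finset.mem_erase.mp hj).1
        simp [hk', Finsupp.single_apply, hij]
      rw [Finset.prod_congr rfl h2, h1, Nat.factorial_succ]
    calc ((∏ j, Nat.factorial (k j) : ℕ) : ℂ) *
            coeff k ((((i :: t).map fun i => (pderiv (R := ℂ) i).toLinearMap).prod) G)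
        = ((∏ j, Nat.factorial (k j) : ℕ) : ℂ) *
            (((k i : ℂ) + 1) * coeff k' (P G)) := by
          rw [happ, coeff_pderiv']
      _ = ((∏ j, Nat.factorial (k' j) : ℕ) : ℂ) * coeff k' (P G) := by
          rw [hfac]; push_cast; ring
      _ = ((∏ j, Nat.factorial ((k' + cntL t) j) : ℕ) : ℂ) * coeff (k' + cntL t) G :=
          ih k' G
      _ = ((∏ j, Nat.factorial ((k + cntL (i :: t)) j) : ℕ) : ℂ) *
            coeff (k + cntL (i :: t)) G := by rw [cntL_cons, hk', add_assoc]

lemma coeff_zero_diffOpMon (m : Fin 3 →₀ ℕ) (G : MvPolynomial (Fin 3) ℂ) :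
    coeff 0 (diffOpMon m G) = ((∏ j, Nat.factorial (m j) : ℕ) : ℂ) * coeff m G := by
  have h := coeff_prodPDeriv m.toMultiset.toList 0 G
  rw [cntL_toList, zero_add] at h
  simpa [diffOpMon] using h

/-- Double-annihilator property for the standard bilinear form on `T → ℂ`. -/
lemma span_of_dot {T : Type*} [Fintype T] [DecidableEq T] {s : ℕ}
    (e : Fin s → T → ℂ) (f : T → ℂ)
    (h : ∀ d : T → ℂ, (∀ i, ∑ m, d m * e i m = 0) → ∑ m, d m * f m = 0) :
    f ∈ Submodule.span ℂ (Set.range e) := by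
  by_contra hf
  set W := Submodule.span ℂ (Set.range e) with hW
  have hq : (W.mkQ f : (T → ℂ) ⧸ W) ≠ 0 := by
    rw [Submodule.mkQ_apply, ne_eq, Submodule.Quotient.mk_eq_zero]
    exact hf
  obtain ⟨ψ, hψ⟩ : ∃ ψ : Module.Dual ℂ ((T → ℂ) ⧸ W), ψ (W.mkQ f) ≠ 0 := by
    by_contra hc
    push_neg at hc
    exact hq ((Module.forall_dual_apply_eq_zero_iff ℂ _).mp hc)
  set φ : (T → ℂ) →ₗ[ℂ] ℂ := ψ.comp W.mkQ with hφ
  have hφW : ∀ x ∈ W, φ x = 0 := by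
    intro x hx
    simp [hφ, Submodule.mkQ_apply, (Submodule.Quotient.mk_eq_zero W).mpr hx]
  set d : T → ℂ := fun m => φ (fun j => if m = j then 1 else 0) with hd
  have hrepr : ∀ x : T → ℂ, φ x = ∑ m, x m * d m := by
    intro x
    rw [LinearMap.pi_apply_eq_sum_univ φ x]
    simp [hd, smul_eq_mul]
  have h1 : ∀ i, ∑ m, d m * e i m = 0 := by
    intro i
    have h0 : φ (e i) = 0 := hφW _ (Submodule.subset_span ⟨i, rfl⟩)
    rw [hrepr] at h0
    rw [← h0]
    exact Finset.sum_congr rfl fun m _ => mul_comm _ _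
  have h2 := h d h1
  have h3 : φ f = 0 := by
    rw [hrepr, ← h2]
    exact Finset.sum_congr rfl fun m _ => mul_comm _ _
  exact hψ h3

lemma prod_X_pow_univ (m : Fin 3 →₀ ℕ) :
    (∏ j, (X j : MvPolynomial (Fin 3) ℂ) ^ m j) = monomial m 1 := by
  rw [← prod_X_pow_eq_monomial]
  exact (Finset.prod_subset (Finset.subset_univ _) (fun x _ hx => by
    rw [Finsupp.notMem_support_iff.mp hx, pow_zero])).symm

lemma coeff_linpow (a : Fin 3 → ℂ) (n : Fin 3 →₀ ℕ) (hn : ∑ j, n j = 4) :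
    coeff n ((∑ j, C (a j) * X j) ^ 4)
      = (Nat.multinomial Finset.univ ⇑n : ℂ) * ∏ j, a j ^ n j := by
  rw [Finset.sum_pow_eq_sum_piAntidiag]
  have hterm : ∀ k : Fin 3 → ℕ,
      ((Nat.multinomial Finset.univ k : MvPolynomial (Fin 3) ℂ) *
        ∏ j, (C (a j) * X j) ^ k j)
      = monomial (Finsupp.equivFunOnFinite.symm k)
          ((Nat.multinomial Finset.univ k : ℂ) * ∏ j, a j ^ k j) := by
    intro k
    have h1 : (∏ j, (C (a j) * X j) ^ k j : MvPolynomial (Fin 3) ℂ)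
        = C (∏ j, a j ^ k j) * monomial (Finsupp.equivFunOnFinite.symm k) 1 := by
      rw [← prod_X_pow_univ (Finsupp.equivFunOnFinite.symm k)]
      simp_rw [mul_pow, ← map_pow]
      rw [Finset.prod_mul_distrib, ← map_prod]
      congr 1
    rw [h1, show ((Nat.multinomial Finset.univ k : ℕ) : MvPolynomial (Fin 3) ℂ)
          = C ((Nat.multinomial Finset.univ k : ℕ) : ℂ) from (map_natCast C _).symm,
        ← mul_assoc, ← map_mul, C_mul_monomial, mul_one]
  rw [MvPolynomial.coeff_sum]
  rw [Finset.sum_eq_single (⇑n)]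
  · rw [hterm, coeff_monomial, if_pos (Finsupp.equivFunOnFinite_symm_coe n)]
  · intro k hk hne
    rw [hterm, coeff_monomial, if_neg]
    intro hc
    apply hne
    have := congrArg (⇑Finsupp.equivFunOnFinite) hc
    exact (by simpa using this : k = Finsupp.equivFunOnFinite n)
  · intro hmem
    exfalso
    apply hmem
    rw [Finset.mem_piAntidiag]
    exact ⟨hn, fun i _ => Finset.mem_univ i⟩

/-- Reye, one direction: if `Z = {[L₁],…,[L_s]}` are distinct points of `ℙV*`
and the degree-4 part of `I_Z` is contained in `ker α_{4,F}`, then `F` lies in the linear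
span of `L₁⁴, …, L_s⁴`. -/
theorem stmt_2 (s : ℕ) (L : Fin s → MvPolynomial (Fin 3) ℂ) (p : Fin s → Fin 3 → ℂ)
    (hp : ∀ i, p i ≠ 0)
    (hL : ∀ i, L i = ∑ j, MvPolynomial.C (p i j) * X j)
    (hdist : ∀ i j, i ≠ j → ∀ c : ℂ, p i ≠ c • p j)
    (F : MvPolynomial (Fin 3) ℂ) (hF : F.IsHomogeneous 4)
    (hker : ∀ D : MvPolynomial (Fin 3) ℂ, D.IsHomogeneous 4 →
      (∀ i, MvPolynomial.eval (p i) D = 0) → diffOp D F = 0) :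
    ∃ c : Fin s → ℂ, F = ∑ i, c i • (L i ^ 4) := by
  classical
  set T : Finset (Fin 3 →₀ ℕ) := Finset.finsuppAntidiag Finset.univ 4 with hTdef
  have hmemT : ∀ n : Fin 3 →₀ ℕ, n ∈ T ↔ ∑ j, n j = 4 := by
    intro n
    rw [hTdef, Finset.mem_finsuppAntidiag]
    exact ⟨fun h => h.1, fun h => ⟨h, Finset.subset_univ _⟩⟩
  have hdeg : ∀ n : Fin 3 →₀ ℕ, n.degree = ∑ j, n j := by
    intro n
    rw [Finsupp.degree]
    exact Finset.sum_subset (Finset.subset_univ _)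
      (fun x _ hx => Finsupp.notMem_support_iff.mp hx)
  have hL4 : ∀ i, (L i ^ 4).IsHomogeneous 4 := by
    intro i
    rw [hL i]
    have h1 : (∑ j, C (p i j) * X j : MvPolynomial (Fin 3) ℂ).IsHomogeneous 1 :=
      IsHomogeneous.sum _ _ _ fun j _ => isHomogeneous_C_mul_X _ _
    simpa using h1.pow 4
  set e : Fin s → {x // x ∈ T} → ℂ := fun i m => ∏ j, p i j ^ (m.1 j) with he
  set f0 : {x // x ∈ T} → ℂ :=
    fun m => ((∏ j, Nat.factorial (m.1 j) : ℕ) : ℂ) * coeff m.1 F with hf0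
  have hkey : f0 ∈ Submodule.span ℂ (Set.range e) := by
    apply span_of_dot
    intro d hd
    set D : MvPolynomial (Fin 3) ℂ := ∑ m ∈ T.attach, monomial m.1 (d m) with hD
    have hcoeffD : ∀ m : {x // x ∈ T}, coeff m.1 D = d m := by
      intro m
      rw [hD, MvPolynomial.coeff_sum]
      rw [Finset.sum_eq_single m]
      · rw [coeff_monomial, if_pos rfl]
      · intro b _ hb
        rw [coeff_monomial, if_neg (fun hc => hb (Subtype.ext hc))]
      · intro hm; exact absurd (Finset.mem_attach T m) hm
    have hsupp : D.support ⊆ T := by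
      intro n hn
      rw [MvPolynomial.mem_support_iff] at hn
      by_contra hnT
      apply hn
      rw [hD, MvPolynomial.coeff_sum]
      apply Finset.sum_eq_zero
      intro m _
      rw [coeff_monomial, if_neg]
      intro hc; exact hnT (hc ▸ m.2)
    have hDhom : D.IsHomogeneous 4 := by
      apply MvPolynomial.IsHomogeneous.sum
      intro m _
      apply isHomogeneous_monomial
      rw [hdeg]
      exact (hmemT m.1).mp m.2
    have heval : ∀ i, eval (p i) D = 0 := by
      intro i
      rw [hD, map_sum]
      have hev : ∀ m : {x // x ∈ T}, eval (p i) (monomial m.1 (d m)) = d m * e i m := by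
        intro m
        rw [eval_monomial]
        congr 1
        rw [Finsupp.prod]
        exact Finset.prod_subset (Finset.subset_univ _) (fun x _ hx => by
          rw [Finsupp.notMem_support_iff.mp hx, pow_zero])
      rw [Finset.sum_congr rfl (fun m _ => hev m), ← Finset.univ_eq_attach]
      exact hd i
    have h0 := hker D hDhom heval
    have h1 : coeff 0 (diffOp D F) = 0 := by rw [h0]; simp
    have h2 : coeff 0 (diffOp D F)
        = ∑ m ∈ D.support,
            coeff m D * (((∏ j, Nat.factorial (m j) : ℕ) : ℂ) * coeff m F) := by
      rw [show diffOp D F = ∑ m ∈ D.support, coeff m D • diffOpMon m F from rfl]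
      rw [MvPolynomial.coeff_sum]
      exact Finset.sum_congr rfl fun m _ => by
        rw [MvPolynomial.coeff_smul, coeff_zero_diffOpMon, smul_eq_mul]
    have h3 : ∑ m ∈ T,
        coeff m D * (((∏ j, Nat.factorial (m j) : ℕ) : ℂ) * coeff m F) = 0 := by
      rw [← Finset.sum_subset hsupp (fun x _ hx => by
        rw [MvPolynomial.notMem_support_iff.mp hx]; ring)]
      rw [← h2, h1]
    calc ∑ m, d m * f0 m
        = ∑ m ∈ T.attach,
            coeff m.1 D * (((∏ j, Nat.factorial (m.1 j) : ℕ) : ℂ) * coeff m.1 F) := by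
          rw [← Finset.univ_eq_attach]
          exact Finset.sum_congr rfl fun m _ => by rw [hcoeffD, hf0]
      _ = ∑ m ∈ T,
            coeff m D * (((∏ j, Nat.factorial (m j) : ℕ) : ℂ) * coeff m F) :=
          Finset.sum_attach T
            (fun m => coeff m D * (((∏ j, Nat.factorial (m j) : ℕ) : ℂ) * coeff m F))
      _ = 0 := h3
  obtain ⟨c', hc'⟩ := (Submodule.mem_span_range_iff_exists_fun ℂ).mp hkey
  refine ⟨fun i => c' i / 24, ?_⟩
  apply MvPolynomial.ext
  intro n
  rw [MvPolynomial.coeff_sum]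
  simp_rw [MvPolynomial.coeff_smul, smul_eq_mul]
  by_cases hn : n ∈ T
  · have h4 : ∑ j, n j = 4 := (hmemT n).mp hn
    have hlc : ∀ i, coeff n (L i ^ 4)
        = (Nat.multinomial Finset.univ ⇑n : ℂ) * ∏ j, p i j ^ n j := by
      intro i; rw [hL i]; exact coeff_linpow (p i) n h4
    have hspan := congrFun hc' ⟨n, hn⟩
    have hspan' : ∑ i, c' i * ∏ j, p i j ^ n j
        = ((∏ j, Nat.factorial (n j) : ℕ) : ℂ) * coeff n F := by
      simpa [Finset.sum_apply, he, hf0] using hspan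
    have hfacne : ((∏ j, Nat.factorial (n j) : ℕ) : ℂ) ≠ 0 := by
      rw [Nat.cast_ne_zero]
      exact Finset.prod_ne_zero_iff.mpr fun j _ => (Nat.factorial_pos _).ne'
    have hmul : ((∏ j, Nat.factorial (n j) : ℕ) : ℂ)
        * (Nat.multinomial Finset.univ ⇑n : ℂ) = 24 := by
      norm_cast
      rw [Nat.multinomial_spec, h4]
      rfl
    simp_rw [hlc]
    refine mul_left_cancel₀ hfacne ?_
    rw [← hspan', Finset.mul_sum]
    refine Finset.sum_congr rfl fun i _ => ?_
    have h24 : (24 : ℂ) ≠ 0 := by norm_num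
    calc c' i * ∏ j, p i j ^ n j
        = (((∏ j, Nat.factorial (n j) : ℕ) : ℂ) * (Nat.multinomial Finset.univ ⇑n : ℂ))
            * (c' i * ∏ j, p i j ^ n j) / 24 := by
          rw [hmul]
          field_simp
      _ = ((∏ j, Nat.factorial (n j) : ℕ) : ℂ) *
            (c' i / 24 * ((Nat.multinomial Finset.univ ⇑n : ℂ) * ∏ j, p i j ^ n j)) := by
          ring
  · have h4 : ∑ j, n j ≠ 4 := fun hc => hn ((hmemT n).mpr hc)
    have hcF : coeff n F = 0 := hF.coeff_eq_zero (by rw [hdeg]; exact h4)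
    rw [hcF]
    symm
    apply Finset.sum_eq_zero
    intro i _
    rw [(hL4 i).coeff_eq_zero (by rw [hdeg]; exact h4), mul_zero]
end

section
/- A ternary quartic of the form F = L₁³L₂, where L₁, L₂ are linearly independent linear forms, cannot be written as c₁M₁⁴ + c₂M₂⁴ for linear forms M₁, M₂ and scalars c₁, c₂. -/
open MvPolynomial

lemma deg1_single {σ : Type*} [DecidableEq σ] (m : σ →₀ ℕ) (h : m.sum (fun _ n => n) = 1) :
    ∃ j, m = Finsupp.single j 1 := by
  have hne : m.support.Nonempty := by
    rcases Finset.eq_empty_or_nonempty m.support with he | hne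
    · exfalso; rw [Finsupp.sum, he] at h; simp at h
    · exact hne
  obtain ⟨j, hj⟩ := hne
  refine ⟨j, ?_⟩
  have hj1 : 1 ≤ m j := Nat.one_le_iff_ne_zero.2 (Finsupp.mem_support_iff.1 hj)
  have hle : m j ≤ 1 := by
    rw [← h, Finsupp.sum]
    exact Finset.single_le_sum (fun i _ => Nat.zero_le _) hj
  have hmj : m j = 1 := le_antisymm hle hj1
  ext i
  rcases eq_or_ne i j with rfl | hij
  · simp [hmj]
  · have hz : m i = 0 := by
      by_contra hi
      have hi' : i ∈ m.support := Finsupp.mem_support_iff.2 hi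
      have hsub : ({i, j} : Finset σ) ⊆ m.support := by
        intro x hx; simp at hx; rcases hx with rfl | rfl <;> assumption
      have h2 : (∑ x ∈ ({i, j} : Finset σ), m x) ≤ m.sum fun _ n => n := by
        rw [Finsupp.sum]
        exact Finset.sum_le_sum_of_subset hsub
      rw [Finset.sum_pair hij, h, hmj] at h2
      omega
    simp [hz, Finsupp.single_apply, Ne.symm hij]

lemma repr1 (L : MvPolynomial (Fin 3) ℂ) (h : L.IsHomogeneous 1) :
    L = ∑ j, C (coeff (Finsupp.single j 1) L) * X j := by
  ext m
  rw [coeff_sum]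
  rcases eq_or_ne m.degree 1 with hd | hd
  · obtain ⟨j, rfl⟩ := deg1_single m (by rw [Finsupp.sum]; exact hd)
    rw [Finset.sum_eq_single j]
    · simp [coeff_C_mul, coeff_X']
    · intro b _ hb
      simp [coeff_C_mul, coeff_X']
      intro he; exact absurd (Finsupp.single_left_injective one_ne_zero he) hb
    · simp
  · rw [h.coeff_eq_zero hd]
    rw [Finset.sum_eq_zero]
    intro j _
    simp [coeff_C_mul, coeff_X']
    intro he
    rw [← he] at hd
    exact absurd (show (Finsupp.single j 1).degree = 1 from by
      show (∑ i ∈ (Finsupp.single j 1).support, Finsupp.single j 1 i) = 1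
      rw [Finsupp.support_single_ne_zero _ one_ne_zero, Finset.sum_singleton,
        Finsupp.single_eq_same]) hd

lemma heval1 (L : MvPolynomial (Fin 3) ℂ) (hL : L.IsHomogeneous 1) (d e : Fin 3 → ℂ) :
    aeval (fun i => Polynomial.C (d i) * Polynomial.X + Polynomial.C (e i)) L =
    Polynomial.C (∑ i, coeff (Finsupp.single i 1) L * d i) * Polynomial.X +
    Polynomial.C (∑ i, coeff (Finsupp.single i 1) L * e i) := by
  conv_lhs => rw [repr1 L hL]
  rw [map_sum, map_sum, map_sum, Finset.sum_mul, ← Finset.sum_add_distrib]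
  apply Finset.sum_congr rfl
  intro i _
  rw [map_mul, aeval_C, aeval_X, map_mul, map_mul, Polynomial.algebraMap_eq]
  ring

lemma exp4 (α β : ℂ) : (Polynomial.C α * Polynomial.X + Polynomial.C β)^4 =
    Polynomial.C (α^4) * Polynomial.X^4 + Polynomial.C (4*(α^3*β)) * Polynomial.X^3 +
    Polynomial.C (6*(α^2*β^2)) * Polynomial.X^2 + Polynomial.C (4*(α*β^3)) * Polynomial.X +
    Polynomial.C (β^4) := by
  simp only [map_mul, map_pow, map_ofNat, map_add]
  ring

lemma final_algebra (c₁ c₂ a₁ b₁ a₂ b₂ : ℂ)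
    (E1 : c₁*(a₁^3*b₁) + c₂*(a₂^3*b₂) = 4⁻¹)
    (E3 : c₁*(a₁*b₁^3) + c₂*(a₂*b₂^3) = 0)
    (E4 : c₁*b₁^4 + c₂*b₂^4 = 0) : False := by
  have h4 : (4:ℂ)⁻¹ ≠ 0 := by norm_num
  by_cases hb1 : b₁ = 0
  · rcases mul_eq_zero.mp (show c₂ * b₂^4 = 0 by linear_combination E4 - b₁^3*c₁*hb1) with hc | hb
    · exact h4 (by linear_combination -E1 + a₂^3*b₂*hc + a₁^3*c₁*hb1)
    · have hb2 : b₂ = 0 := pow_eq_zero_iff (n := 4) (by norm_num) |>.mp hb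
      exact h4 (by linear_combination -E1 + c₂*a₂^3*hb2 + a₁^3*c₁*hb1)
  · by_cases hb2 : b₂ = 0
    · rcases mul_eq_zero.mp (show c₁ * b₁^4 = 0 by linear_combination E4 - b₂^3*c₂*hb2) with hc | hb
      · exact h4 (by linear_combination -E1 + a₁^3*b₁*hc + a₂^3*c₂*hb2)
      · exact absurd (pow_eq_zero_iff (n := 4) (by norm_num) |>.mp hb) hb1
    · by_cases hd : a₁*b₂ - a₂*b₁ = 0
      · have key : (4:ℂ)⁻¹ * b₂^3 = 0 := by
          linear_combination -b₂^3*E1 + a₂^3*E4 + c₁*b₁*(a₁^2*b₂^2 + a₁*a₂*b₁*b₂ + a₂^2*b₁^2)*hd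
        rcases mul_eq_zero.mp key with h | h
        · exact h4 h
        · exact hb2 (pow_eq_zero_iff (n := 3) (by norm_num) |>.mp h)
      · have hc1 : c₁ * (b₁^3*(b₂^3*(a₁*b₂-a₂*b₁))) = 0 := by
          linear_combination b₂^4*E3 - a₂*b₂^3*E4
        have hc2 : c₂ * (b₁^3*(b₂^3*(a₁*b₂-a₂*b₁))) = 0 := by
          linear_combination -b₁^4*E3 + a₁*b₁^3*E4
        have hne : b₁^3*(b₂^3*(a₁*b₂-a₂*b₁)) ≠ 0 :=
          mul_ne_zero (pow_ne_zero _ hb1) (mul_ne_zero (pow_ne_zero _ hb2) hd)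
        have h1 : c₁ = 0 := by rcases mul_eq_zero.mp hc1 with h | h; exact h; exact absurd h hne
        have h2 : c₂ = 0 := by rcases mul_eq_zero.mp hc2 with h | h; exact h; exact absurd h hne
        exact h4 (by linear_combination -E1 + a₁^3*b₁*h1 + a₂^3*b₂*h2)

lemma sum_two (f : Fin 3 → ℂ) (j k : Fin 3) (hjk : j ≠ k) (x y : ℂ) :
    (∑ i, f i * (if i = j then x else if i = k then y else 0)) = f j * x + f k * y := by
  have key : ∀ i, f i * (if i = j then x else if i = k then y else 0)
      = (if i = j then f j * x else 0) + (if i = k then f k * y else 0) := by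
    intro i
    by_cases h1 : i = j
    · subst h1; rw [if_pos rfl, if_pos rfl, if_neg hjk]; ring
    · rw [if_neg h1, if_neg h1]
      by_cases h2 : i = k
      · subst h2; rw [if_pos rfl, if_pos rfl]; ring
      · rw [if_neg h2, if_neg h2]; ring
  rw [Finset.sum_congr rfl (fun i _ => key i), Finset.sum_add_distrib,
    Finset.sum_ite_eq' Finset.univ j, Finset.sum_ite_eq' Finset.univ k]
  simp

lemma endgame (L₁ L₂ M₁ M₂ : MvPolynomial (Fin 3) ℂ)
    (h₁ : L₁.IsHomogeneous 1) (h₂ : L₂.IsHomogeneous 1)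
    (hM₁ : M₁.IsHomogeneous 1) (hM₂ : M₂.IsHomogeneous 1) (c₁ c₂ : ℂ)
    (heq : L₁ ^ 3 * L₂ = c₁ • M₁ ^ 4 + c₂ • M₂ ^ 4) (d e : Fin 3 → ℂ)
    (had : ∑ i, coeff (Finsupp.single i 1) L₁ * d i = 1)
    (hae : ∑ i, coeff (Finsupp.single i 1) L₁ * e i = 0)
    (hbd : ∑ i, coeff (Finsupp.single i 1) L₂ * d i = 0)
    (hbe : ∑ i, coeff (Finsupp.single i 1) L₂ * e i = 1) : False := by
  have happ := congrArg
    (aeval (fun i => Polynomial.C (d i) * Polynomial.X + Polynomial.C (e i))) heq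
  simp only [map_add, map_mul, map_pow, map_smul] at happ
  rw [heval1 L₁ h₁ d e, heval1 L₂ h₂ d e, heval1 M₁ hM₁ d e, heval1 M₂ hM₂ d e,
    had, hae, hbd, hbe] at happ
  simp only [Polynomial.C_1, Polynomial.C_0, one_mul, add_zero, zero_mul, zero_add, mul_one,
    exp4] at happ
  have E1 := congrArg (fun p => Polynomial.coeff p 3) happ
  have E3 := congrArg (fun p => Polynomial.coeff p 1) happ
  have E4 := congrArg (fun p => Polynomial.coeff p 0) happ
  simp only [Polynomial.coeff_smul, Polynomial.coeff_add, Polynomial.coeff_C_mul,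
    Polynomial.coeff_X_pow, Polynomial.coeff_X, Polynomial.coeff_C, smul_eq_mul] at E1 E3 E4
  norm_num at E1 E3 E4
  exact final_algebra c₁ c₂ (∑ i, coeff (Finsupp.single i 1) M₁ * d i)
    (∑ i, coeff (Finsupp.single i 1) M₁ * e i) (∑ i, coeff (Finsupp.single i 1) M₂ * d i)
    (∑ i, coeff (Finsupp.single i 1) M₂ * e i)
    (by linear_combination (-4⁻¹:ℂ) * E1) (by linear_combination (-4⁻¹:ℂ) * E3)
    (by linear_combination -E4)

lemma comb_zero (L₁ L₂ : MvPolynomial (Fin 3) ℂ)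
    (h₁ : L₁.IsHomogeneous 1) (h₂ : L₂.IsHomogeneous 1) (s t : ℂ)
    (h : ∀ j, s * coeff (Finsupp.single j 1) L₁ + t * coeff (Finsupp.single j 1) L₂ = 0) :
    s • L₁ + t • L₂ = 0 := by
  rw [repr1 L₁ h₁, repr1 L₂ h₂, Finset.smul_sum, Finset.smul_sum, ← Finset.sum_add_distrib]
  apply Finset.sum_eq_zero
  intro j _
  rw [smul_eq_C_mul, smul_eq_C_mul]
  trans (C (s * coeff (Finsupp.single j 1) L₁ + t * coeff (Finsupp.single j 1) L₂) * X j)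
  · rw [map_add, map_mul, map_mul]; ring
  · rw [h j, map_zero, zero_mul]

/-- a quartic `L₁³L₂` with `L₁, L₂` linearly independent linear forms does not
lie in the span of two fourth powers of linear forms. -/
theorem stmt_9 (L₁ L₂ : MvPolynomial (Fin 3) ℂ)
    (h₁ : L₁.IsHomogeneous 1) (h₂ : L₂.IsHomogeneous 1)
    (hind : LinearIndependent ℂ ![L₁, L₂]) :
    ¬ ∃ (c₁ c₂ : ℂ) (M₁ M₂ : MvPolynomial (Fin 3) ℂ),
        M₁.IsHomogeneous 1 ∧ M₂.IsHomogeneous 1 ∧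
        L₁ ^ 3 * L₂ = c₁ • M₁ ^ 4 + c₂ • M₂ ^ 4 := by
  rintro ⟨c₁, c₂, M₁, M₂, hM₁, hM₂, heq⟩
  have hpair := LinearIndependent.pair_iff.mp hind
  have hminor : ∃ j k, coeff (Finsupp.single j 1) L₁ * coeff (Finsupp.single k 1) L₂
      - coeff (Finsupp.single k 1) L₁ * coeff (Finsupp.single j 1) L₂ ≠ 0 := by
    by_contra hcon
    push_neg at hcon
    by_cases hb0 : ∀ k, coeff (Finsupp.single k 1) L₂ = 0
    · have hL2 : L₂ = 0 := by
        rw [repr1 L₂ h₂]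
        apply Finset.sum_eq_zero; intro j _
        rw [hb0 j]; simp
      have := (hpair 0 1 (by simp [hL2])).2
      simp at this
    · push_neg at hb0
      obtain ⟨k, hk⟩ := hb0
      apply hk
      refine (hpair (coeff (Finsupp.single k 1) L₂) (-(coeff (Finsupp.single k 1) L₁)) ?_).1
      apply comb_zero L₁ L₂ h₁ h₂
      intro j
      linear_combination hcon j k
  obtain ⟨j, k, hΔ⟩ := hminor
  have hjk : j ≠ k := by rintro rfl; exact hΔ (by ring)
  refine endgame L₁ L₂ M₁ M₂ h₁ h₂ hM₁ hM₂ c₁ c₂ heq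
    (fun i => if i = j
      then coeff (Finsupp.single k 1) L₂ / (coeff (Finsupp.single j 1) L₁ *
        coeff (Finsupp.single k 1) L₂ - coeff (Finsupp.single k 1) L₁ *
        coeff (Finsupp.single j 1) L₂)
      else if i = k then -(coeff (Finsupp.single j 1) L₂) / (coeff (Finsupp.single j 1) L₁ *
        coeff (Finsupp.single k 1) L₂ - coeff (Finsupp.single k 1) L₁ *
        coeff (Finsupp.single j 1) L₂) else 0)
    (fun i => if i = j
      then -(coeff (Finsupp.single k 1) L₁) / (coeff (Finsupp.single j 1) L₁ *
        coeff (Finsupp.single k 1) L₂ - coeff (Finsupp.single k 1) L₁ *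
        coeff (Finsupp.single j 1) L₂)
      else if i = k then coeff (Finsupp.single j 1) L₁ / (coeff (Finsupp.single j 1) L₁ *
        coeff (Finsupp.single k 1) L₂ - coeff (Finsupp.single k 1) L₁ *
        coeff (Finsupp.single j 1) L₂) else 0)
    ?_ ?_ ?_ ?_ <;>
  · simp only [sum_two _ j k hjk]
    simp only [mul_div_assoc']
    rw [← add_div, div_eq_iff hΔ]
    ring
end

section
/- The quartic F = x₀⁴ + x₁⁴ + x₂⁴ + (x₀+x₁+x₂)⁴ has middle catalecticant α_{2,F} : S_2 V → S_2 V* of rank exactly 4. -/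
open MvPolynomial

lemma pderiv_ofNat {σ : Type*} [DecidableEq σ] (i : σ) (n : ℕ) [n.AtLeastTwo] :
    pderiv i (OfNat.ofNat n : MvPolynomial σ ℂ) = 0 := by
  rw [← map_ofNat (C : ℂ →+* MvPolynomial σ ℂ), pderiv_C]

lemma pderiv_natCast' {σ : Type*} [DecidableEq σ] (i : σ) (n : ℕ) :
    pderiv i ((n : MvPolynomial σ ℂ)) = 0 := by
  rw [← map_natCast (C : ℂ →+* MvPolynomial σ ℂ), pderiv_C]

lemma pderiv_comm' {σ : Type*} [DecidableEq σ] (i j : σ) (p : MvPolynomial σ ℂ) :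
    pderiv i (pderiv j p) = pderiv j (pderiv i p) := by
  induction p using MvPolynomial.induction_on' with
  | monomial s a =>
      simp only [pderiv_monomial]
      rw [tsub_tsub, tsub_tsub, add_comm (Finsupp.single j 1)]
      rcases eq_or_ne i j with rfl | hij
      · ring_nf
      · rw [Finsupp.tsub_apply, Finsupp.tsub_apply, Finsupp.single_eq_of_ne' hij,
          Finsupp.single_eq_of_ne' (Ne.symm hij)]
        simp only [tsub_zero]
        congr 1
        ring
  | add p q hp hq => simp [hp, hq]

lemma commute_pderiv {σ : Type*} [Fintype σ] [DecidableEq σ] (i j : σ) :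
    Commute ((pderiv i).toLinearMap : Module.End ℂ (MvPolynomial σ ℂ))
      (pderiv j).toLinearMap := by
  apply LinearMap.ext
  intro p
  exact pderiv_comm' i j p

lemma diffOpMon_pair {σ : Type*} [Fintype σ] [DecidableEq σ] (i j : σ) :
    diffOpMon (Finsupp.single i 1 + Finsupp.single j 1) =
      ((pderiv i).toLinearMap : Module.End ℂ (MvPolynomial σ ℂ)) * (pderiv j).toLinearMap := by
  unfold diffOpMon
  have hl : ((Finsupp.single i 1 + Finsupp.single j 1 :
      σ →₀ ℕ).toMultiset.toList : Multiset σ) = (↑[i, j] : Multiset σ) := by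
    rw [Multiset.coe_toList, Finsupp.toMultiset_add, Finsupp.toMultiset_single,
      Finsupp.toMultiset_single, one_smul, one_smul]
    rfl
  have hperm : (Finsupp.single i 1 + Finsupp.single j 1 :
      σ →₀ ℕ).toMultiset.toList.Perm [i, j] := Multiset.coe_eq_coe.mp hl
  have hpc : ((Finsupp.single i 1 + Finsupp.single j 1 :
      σ →₀ ℕ).toMultiset.toList.map fun i => ((pderiv i).toLinearMap :
        Module.End ℂ (MvPolynomial σ ℂ))).Pairwise Commute := by
    rw [List.pairwise_map]
    exact List.Pairwise.imp (fun h => commute_pderiv _ _)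
      (List.pairwise_of_forall (fun _ _ => trivial))
  rw [List.Perm.prod_eq' (hperm.map _) hpc]
  simp

lemma diffOp_monomial {σ : Type*} [Fintype σ] [DecidableEq σ] (m : σ →₀ ℕ)
    (F : MvPolynomial σ ℂ) :
    diffOp (monomial m 1) F = diffOpMon m F := by
  unfold diffOp
  rw [show AddMonoidAlgebra.coeff (monomial m 1 : MvPolynomial σ ℂ) = Finsupp.single m 1 from rfl]
  rw [Finsupp.sum_single_index (by simp)]
  simp

noncomputable def Fq : MvPolynomial (Fin 3) ℂ :=
  (X 0) ^ 4 + (X 1) ^ 4 + (X 2) ^ 4 + (X 0 + X 1 + X 2) ^ 4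

noncomputable def vv : Fin 4 → MvPolynomial (Fin 3) ℂ :=
  ![12 * X 0 ^ 2 + 12 * (X 0 + X 1 + X 2) ^ 2,
    12 * X 1 ^ 2 + 12 * (X 0 + X 1 + X 2) ^ 2,
    12 * X 2 ^ 2 + 12 * (X 0 + X 1 + X 2) ^ 2,
    12 * (X 0 + X 1 + X 2) ^ 2]

lemma dd00 : pderiv 0 (pderiv 0 Fq) = vv 0 := by
  simp only [Fq, vv, Matrix.cons_val_zero, map_add, pderiv_pow, pderiv_X_self,
    pderiv_X_of_ne (by decide : (1:Fin 3) ≠ 0), pderiv_X_of_ne (by decide : (2:Fin 3) ≠ 0),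
    pderiv_mul, pderiv_C, pderiv_one, pderiv_ofNat, pderiv_natCast', map_zero]
  ring

lemma dd11 : pderiv 1 (pderiv 1 Fq) = vv 1 := by
  simp only [Fq, vv, Matrix.cons_val_one, Matrix.cons_val_zero, Matrix.head_cons, map_add, pderiv_pow, pderiv_X_self,
    pderiv_X_of_ne (by decide : (0:Fin 3) ≠ 1), pderiv_X_of_ne (by decide : (2:Fin 3) ≠ 1),
    pderiv_mul, pderiv_C, pderiv_one, pderiv_ofNat, pderiv_natCast', map_zero]
  ring

lemma dd22 : pderiv 2 (pderiv 2 Fq) = vv 2 := by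
  simp only [Fq, vv, Matrix.cons_val_two, Matrix.tail_cons, Matrix.head_cons, map_add, pderiv_pow,
    pderiv_X_self,
    pderiv_X_of_ne (by decide : (0:Fin 3) ≠ 2), pderiv_X_of_ne (by decide : (1:Fin 3) ≠ 2),
    pderiv_mul, pderiv_C, pderiv_one, pderiv_ofNat, pderiv_natCast', map_zero]
  ring

lemma dd01 : pderiv 0 (pderiv 1 Fq) = vv 3 := by
  simp only [Fq, vv, Matrix.cons_val_three, Matrix.tail_cons, Matrix.head_cons, map_add,
    pderiv_pow, pderiv_X_self,
    pderiv_X_of_ne (by decide : (0:Fin 3) ≠ 1), pderiv_X_of_ne (by decide : (2:Fin 3) ≠ 1),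
    pderiv_X_of_ne (by decide : (1:Fin 3) ≠ 0), pderiv_X_of_ne (by decide : (2:Fin 3) ≠ 0),
    pderiv_mul, pderiv_C, pderiv_one, pderiv_ofNat, pderiv_natCast', map_zero]
  ring

lemma dd02 : pderiv 0 (pderiv 2 Fq) = vv 3 := by
  simp only [Fq, vv, Matrix.cons_val_three, Matrix.tail_cons, Matrix.head_cons, map_add,
    pderiv_pow, pderiv_X_self,
    pderiv_X_of_ne (by decide : (0:Fin 3) ≠ 2), pderiv_X_of_ne (by decide : (1:Fin 3) ≠ 2),
    pderiv_X_of_ne (by decide : (1:Fin 3) ≠ 0), pderiv_X_of_ne (by decide : (2:Fin 3) ≠ 0),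
    pderiv_mul, pderiv_C, pderiv_one, pderiv_ofNat, pderiv_natCast', map_zero]
  ring

lemma dd12 : pderiv 1 (pderiv 2 Fq) = vv 3 := by
  simp only [Fq, vv, Matrix.cons_val_three, Matrix.tail_cons, Matrix.head_cons, map_add,
    pderiv_pow, pderiv_X_self,
    pderiv_X_of_ne (by decide : (0:Fin 3) ≠ 2), pderiv_X_of_ne (by decide : (1:Fin 3) ≠ 2),
    pderiv_X_of_ne (by decide : (0:Fin 3) ≠ 1), pderiv_X_of_ne (by decide : (2:Fin 3) ≠ 1),
    pderiv_mul, pderiv_C, pderiv_one, pderiv_ofNat, pderiv_natCast', map_zero]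
  ring

lemma diffOpMon_pair_apply (i j : Fin 3) :
    diffOpMon (Finsupp.single i 1 + Finsupp.single j 1) Fq = pderiv i (pderiv j Fq) := by
  rw [diffOpMon_pair]
  rfl

lemma mem_range_vv (m : Fin 3 →₀ ℕ) (hm : m 0 + m 1 + m 2 = 2) :
    diffOpMon m Fq ∈ Set.range vv := by
  have hrep : m = Finsupp.single 0 (m 0) + Finsupp.single 1 (m 1) + Finsupp.single 2 (m 2) := by
    ext k
    fin_cases k <;> simp
  have hcase : (m 0 = 2 ∧ m 1 = 0 ∧ m 2 = 0) ∨ (m 0 = 0 ∧ m 1 = 2 ∧ m 2 = 0) ∨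
      (m 0 = 0 ∧ m 1 = 0 ∧ m 2 = 2) ∨ (m 0 = 1 ∧ m 1 = 1 ∧ m 2 = 0) ∨
      (m 0 = 1 ∧ m 1 = 0 ∧ m 2 = 1) ∨ (m 0 = 0 ∧ m 1 = 1 ∧ m 2 = 1) := by omega
  have hsingle2 : ∀ i : Fin 3, Finsupp.single i 2 =
      Finsupp.single i 1 + Finsupp.single i 1 := by
    intro i
    rw [← Finsupp.single_add]
  rcases hcase with ⟨h0, h1, h2⟩ | ⟨h0, h1, h2⟩ | ⟨h0, h1, h2⟩ | ⟨h0, h1, h2⟩ |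
      ⟨h0, h1, h2⟩ | ⟨h0, h1, h2⟩ <;>
    rw [hrep, h0, h1, h2] <;>
    simp only [Finsupp.single_zero, add_zero, zero_add, hsingle2]
  · exact ⟨0, by rw [diffOpMon_pair_apply, dd00]⟩
  · exact ⟨1, by rw [diffOpMon_pair_apply, dd11]⟩
  · exact ⟨2, by rw [diffOpMon_pair_apply, dd22]⟩
  · exact ⟨3, by rw [diffOpMon_pair_apply, dd01]⟩
  · exact ⟨3, by rw [diffOpMon_pair_apply, dd02]⟩
  · exact ⟨3, by rw [diffOpMon_pair_apply, dd12]⟩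

lemma degree_of_mem_support {D : MvPolynomial (Fin 3) ℂ} (hD : D.IsHomogeneous 2)
    {m : Fin 3 →₀ ℕ} (hm : coeff m D ≠ 0) : m 0 + m 1 + m 2 = 2 := by
  have h := hD hm
  rw [show (Finsupp.weight 1 : (Fin 3 →₀ ℕ) →+ ℕ) = Finsupp.weight (fun _ => 1) from rfl, ← Finsupp.degree_eq_weight_one] at h
  have hdeg : m.degree = ∑ i : Fin 3, m i :=
    Finset.sum_subset (Finset.subset_univ _)
      (fun i _ hi => Finsupp.notMem_support_iff.mp hi)
  rw [hdeg, Fin.sum_univ_three] at h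
  exact h

lemma pair_homog (i j : Fin 3) :
    (monomial (Finsupp.single i 1 + Finsupp.single j 1) (1 : ℂ)).IsHomogeneous 2 := by
  apply isHomogeneous_monomial
  rw [Finsupp.degree_eq_weight_one, map_add]
  simp [Finsupp.weight_apply, Finsupp.sum_single_index]

lemma vv_mem_image (k : Fin 4) :
    vv k ∈ (fun D => diffOp D Fq) '' {D : MvPolynomial (Fin 3) ℂ | D.IsHomogeneous 2} := by
  fin_cases k
  · refine ⟨monomial (Finsupp.single 0 1 + Finsupp.single 0 1) 1, pair_homog 0 0, ?_⟩
    show diffOp _ Fq = _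
    rw [diffOp_monomial, diffOpMon_pair_apply, dd00]
    rfl
  · refine ⟨monomial (Finsupp.single 1 1 + Finsupp.single 1 1) 1, pair_homog 1 1, ?_⟩
    show diffOp _ Fq = _
    rw [diffOp_monomial, diffOpMon_pair_apply, dd11]
    rfl
  · refine ⟨monomial (Finsupp.single 2 1 + Finsupp.single 2 1) 1, pair_homog 2 2, ?_⟩
    show diffOp _ Fq = _
    rw [diffOp_monomial, diffOpMon_pair_apply, dd22]
    rfl
  · refine ⟨monomial (Finsupp.single 0 1 + Finsupp.single 1 1) 1, pair_homog 0 1, ?_⟩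
    show diffOp _ Fq = _
    rw [diffOp_monomial, diffOpMon_pair_apply, dd01]
    rfl

lemma vv_li : LinearIndependent ℂ vv := by
  rw [Fintype.linearIndependent_iff]
  intro g hg
  have hev : ∀ φ : Fin 3 → ℂ, ∑ i, g i * eval φ (vv i) = 0 := by
    intro φ
    have := congrArg (eval φ) hg
    rw [map_sum, map_zero] at this
    simpa [smul_eval] using this
  have e1 := hev ![1, -1, 0]
  have e2 := hev ![0, 1, -1]
  have e3 := hev ![1, 1, -2]
  have e4 := hev ![1, 0, 0]
  simp only [vv, Fin.sum_univ_four, Matrix.cons_val_zero, Matrix.cons_val_one, Matrix.head_cons,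
    Matrix.cons_val_two, Matrix.tail_cons, Matrix.cons_val_three, map_add, map_mul, map_pow,
    map_ofNat, eval_X] at e1 e2 e3 e4
  norm_num at e1 e2 e3 e4
  have h0 : g 0 = 0 := by linear_combination e1 / 12 - e2 / 12 + (e3 - e1) / 48
  have h1 : g 1 = 0 := by linear_combination e2 / 12 - (e3 - e1) / 48
  have h2 : g 2 = 0 := by linear_combination (e3 - e1) / 48
  have h3 : g 3 = 0 := by linear_combination e4 / 12 - e1 / 6 + e2 / 12 - (e3 - e1) / 24
  intro i
  fin_cases i
  exacts [h0, h1, h2, h3]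

/-- the Caporali quartic `x₀⁴ + x₁⁴ + x₂⁴ + (x₀+x₁+x₂)⁴` has middle
catalecticant of rank exactly 4. -/
theorem stmt_14 :
    cataRank 2
      ((X 0) ^ 4 + (X 1) ^ 4 + (X 2) ^ 4 + (X 0 + X 1 + X 2) ^ 4 :
        MvPolynomial (Fin 3) ℂ) = 4 := by
  have hFq : ((X 0) ^ 4 + (X 1) ^ 4 + (X 2) ^ 4 + (X 0 + X 1 + X 2) ^ 4 :
      MvPolynomial (Fin 3) ℂ) = Fq := rfl
  rw [hFq]
  unfold cataRank
  have hspan : Submodule.span ℂ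
      ((fun D => diffOp D Fq) '' {D : MvPolynomial (Fin 3) ℂ | D.IsHomogeneous 2}) =
      Submodule.span ℂ (Set.range vv) := by
    apply le_antisymm
    · rw [Submodule.span_le]
      rintro x ⟨D, hD, rfl⟩
      show diffOp D Fq ∈ Submodule.span ℂ (Set.range vv)
      unfold diffOp
      rw [Finsupp.sum]
      apply Submodule.sum_mem
      intro m hm
      apply Submodule.smul_mem
      apply Submodule.subset_span
      exact mem_range_vv m (degree_of_mem_support hD (Finsupp.mem_support_iff.mp hm))
    · rw [Submodule.span_le]
      rintro x ⟨k, rfl⟩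
      exact Submodule.subset_span (vv_mem_image k)
  rw [hspan, finrank_span_eq_card vv_li]
  simp
end

section
/- The Veronese variety W₁ ⊂ ℙ(S_4 V*) of fourth powers of linear forms satisfies: F is a nonzero scalar multiple of a fourth power L⁴ if and only if the catalecticant map α_{2,F} : S_2 V → S_2 V* has rank exactly 1. -/
open MvPolynomial

set_option linter.unusedSectionVars false

section
variable {σ : Type*} [Fintype σ] [DecidableEq σ]

lemma degree_eq_sum_univ (d : σ →₀ ℕ) : d.degree = ∑ i, d i := by
  rw [Finsupp.degree]
  exact Finset.sum_subset (Finset.subset_univ _) fun i _ h => Finsupp.notMem_support_iff.mp h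

lemma sub_add_single_cancel {d : σ →₀ ℕ} {i : σ} (h : d i ≠ 0) :
    d - Finsupp.single i 1 + Finsupp.single i 1 = d := by
  ext k
  simp only [Finsupp.add_apply, Finsupp.tsub_apply, Finsupp.single_apply]
  rcases eq_or_ne i k with rfl | hk
  · simp only [eq_self_iff_true, if_true]; omega
  · simp only [if_neg hk]; omega

lemma X_mul_pderiv_monomial {d : σ →₀ ℕ} {a : ℂ} (i : σ) :
    X i * pderiv i (monomial d a) = (d i : ℂ) • monomial d a := by
  rw [pderiv_monomial]
  rcases eq_or_ne (d i) 0 with h | h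
  · simp [h]
  · rw [show (X i : MvPolynomial σ ℂ) = monomial (Finsupp.single i 1) 1 from rfl,
      monomial_mul, one_mul, add_comm, sub_add_single_cancel h, smul_monomial]
    rw [smul_eq_mul, mul_comm]

lemma euler_identity {n : ℕ} {φ : MvPolynomial σ ℂ} (h : φ.IsHomogeneous n) :
    ∑ i, X i * pderiv i φ = (n : ℂ) • φ := by
  conv_lhs => rw [← support_sum_monomial_coeff φ]
  conv_rhs => rw [← support_sum_monomial_coeff φ]
  rw [Finset.smul_sum]
  simp only [map_sum, Finset.mul_sum]
  rw [Finset.sum_comm]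
  refine Finset.sum_congr rfl fun d hd => ?_
  simp only [_root_.X_mul_pderiv_monomial]
  rw [← Finset.sum_smul]
  congr 1
  have hdeg : d.degree = n := by
    rw [Finsupp.degree_eq_weight_one]; exact h (Finsupp.mem_support_iff.mp hd)
  rw [degree_eq_sum_univ] at hdeg
  rw [← hdeg]
  push_cast
  rfl

lemma isHomogeneous_pderiv' {n : ℕ} {φ : MvPolynomial σ ℂ} (h : φ.IsHomogeneous (n + 1))
    (i : σ) : (pderiv i φ).IsHomogeneous n := by
  conv_lhs => rw [← support_sum_monomial_coeff φ]
  rw [map_sum]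
  apply IsHomogeneous.sum
  intro d hd
  rw [pderiv_monomial]
  rcases eq_or_ne (d i) 0 with h0 | h0
  · rw [h0]; simp only [Nat.cast_zero, mul_zero, monomial_zero]; exact isHomogeneous_zero _ _ _
  · apply isHomogeneous_monomial
    have hdeg : d.degree = n + 1 := by
      rw [Finsupp.degree_eq_weight_one]; exact h (Finsupp.mem_support_iff.mp hd)
    have hc := sub_add_single_cancel h0
    have h2 : (d - Finsupp.single i 1).degree + (Finsupp.single i 1).degree = d.degree := by
      rw [degree_eq_sum_univ, degree_eq_sum_univ, degree_eq_sum_univ, ← Finset.sum_add_distrib]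
      exact Finset.sum_congr rfl fun k _ => by rw [← Finsupp.add_apply, hc]
    have h3 : (Finsupp.single i 1).degree = 1 := by
      rw [degree_eq_sum_univ]
      simp [Finsupp.single_apply]
    omega

lemma eq_C_of_isHomogeneous_zero {φ : MvPolynomial σ ℂ} (h : φ.IsHomogeneous 0) :
    φ = C (coeff 0 φ) := by
  ext d
  rcases eq_or_ne d 0 with rfl | hd
  · simp
  · rw [coeff_C, if_neg (Ne.symm hd)]
    exact h.coeff_eq_zero (by rwa [Ne, Finsupp.degree_eq_zero_iff])

lemma pderiv_commute (a b : σ) :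
    Commute ((pderiv a).toLinearMap : Module.End ℂ (MvPolynomial σ ℂ))
      (pderiv b).toLinearMap := by
  apply LinearMap.ext
  intro p
  simpa using pderiv_comm' a b p

lemma diffOpMon_degree_two {m : σ →₀ ℕ} (hm : m.degree = 2) :
    ∃ i j : σ, ∀ F, diffOpMon m F = pderiv i (pderiv j F) := by
  have hlen : m.toMultiset.toList.length = 2 := by
    rw [Multiset.length_toList, Finsupp.card_toMultiset]
    exact hm
  obtain ⟨i, j, hij⟩ := List.length_eq_two.mp hlen
  refine ⟨i, j, fun F => ?_⟩
  rw [diffOpMon, hij]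
  simp [List.prod_cons, Module.End.mul_apply]

lemma diffOpMon_add_single (i j : σ) (F : MvPolynomial σ ℂ) :
    diffOpMon (Finsupp.single i 1 + Finsupp.single j 1) F = pderiv i (pderiv j F) := by
  have hm : (Finsupp.single i 1 + Finsupp.single j 1 : σ →₀ ℕ).toMultiset = ↑[i, j] := by
    rw [Finsupp.toMultiset_add, Finsupp.toMultiset_single, Finsupp.toMultiset_single]
    simp
    rfl
  have hperm : (Finsupp.single i 1 + Finsupp.single j 1 : σ →₀ ℕ).toMultiset.toList.Perm
      [i, j] := by
    rw [← Multiset.coe_eq_coe, Multiset.coe_toList, hm]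
  rw [diffOpMon]
  have hcomm : ((Finsupp.single i 1 + Finsupp.single j 1 : σ →₀ ℕ).toMultiset.toList.map
      fun i => ((pderiv i).toLinearMap : Module.End ℂ (MvPolynomial σ ℂ))).Pairwise Commute := by
    apply List.Pairwise.map
    · exact fun {a b} _ => pderiv_commute a b
    · exact List.pairwise_of_forall_mem_list fun a _ b _ => trivial
  have := (hperm.map
    fun i => ((pderiv i).toLinearMap : Module.End ℂ (MvPolynomial σ ℂ))).prod_eq' hcomm
  rw [this]
  simp [List.prod_cons, Module.End.mul_apply]

lemma diffOp_X_mul_X (i j : σ) (F : MvPolynomial σ ℂ) :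
    diffOp (X i * X j) F = pderiv i (pderiv j F) := by
  have : (X i * X j : MvPolynomial σ ℂ)
      = monomial (Finsupp.single i 1 + Finsupp.single j 1) 1 := by
    rw [show (X i : MvPolynomial σ ℂ) = monomial (Finsupp.single i 1) 1 from rfl,
      show (X j : MvPolynomial σ ℂ) = monomial (Finsupp.single j 1) 1 from rfl,
      monomial_mul, one_mul]
  rw [diffOp, this, sum_monomial_eq (by simp)]
  rw [one_smul, diffOpMon_add_single]

lemma span_cata (F : MvPolynomial σ ℂ) :
    Submodule.span ℂ ((fun D => diffOp D F) '' {D : MvPolynomial σ ℂ | D.IsHomogeneous 2})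
      = Submodule.span ℂ (Set.range fun p : σ × σ => pderiv p.1 (pderiv p.2 F)) := by
  apply le_antisymm
  · rw [Submodule.span_le]
    rintro x ⟨D, hD, rfl⟩
    simp only [SetLike.mem_coe]
    rw [diffOp]
    apply Submodule.finsuppSum_mem
    intro m hm
    apply Submodule.smul_mem
    have hdeg : m.degree = 2 := by
      rw [Finsupp.degree_eq_weight_one]
      exact hD hm
    obtain ⟨i, j, hij⟩ := diffOpMon_degree_two hdeg
    rw [hij]
    exact Submodule.subset_span ⟨(i, j), rfl⟩
  · rw [Submodule.span_le]
    rintro x ⟨⟨i, j⟩, rfl⟩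
    exact Submodule.subset_span
      ⟨X i * X j, (isHomogeneous_X ℂ i).mul (isHomogeneous_X ℂ j), diffOp_X_mul_X i j F⟩

end

set_option maxHeartbeats 1000000 in
set_option synthInstance.maxHeartbeats 400000 in
/-- a ternary quartic `F` is a nonzero scalar multiple of a fourth power of
a (nonzero) linear form iff its middle catalecticant has rank exactly 1. -/
theorem stmt_17 (F : MvPolynomial (Fin 3) ℂ) (hF : F.IsHomogeneous 4) :
    (∃ (c : ℂ) (L : MvPolynomial (Fin 3) ℂ),
        c ≠ 0 ∧ L ≠ 0 ∧ L.IsHomogeneous 1 ∧ F = c • L ^ 4) ↔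
      cataRank 2 F = 1 := by
  rw [cataRank, span_cata]
  constructor
  · rintro ⟨c, L, hc, hL, hL1, rfl⟩
    have hLd : ∀ i, pderiv i L = C (coeff 0 (pderiv i L)) := fun i =>
      eq_C_of_isHomogeneous_zero (isHomogeneous_pderiv' hL1 i)
    set a : Fin 3 → ℂ := fun i => coeff 0 (pderiv i L) with ha
    have hd1 : ∀ j, pderiv j (L ^ 4) = (4 * a j) • L ^ 3 := by
      intro j
      rw [pderiv_pow, hLd j, smul_eq_C_mul, map_mul]
      push_cast
      simp only [map_ofNat]
      ring
    have key : ∀ pr : Fin 3 × Fin 3,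
        pderiv pr.1 (pderiv pr.2 ((c • L ^ 4 : MvPolynomial (Fin 3) ℂ)))
          = (12 * c * a pr.1 * a pr.2) • L ^ 2 := by
      rintro ⟨i, j⟩
      rw [Derivation.map_smul, hd1 j, Derivation.map_smul, Derivation.map_smul, pderiv_pow,
        hLd i]
      simp only [smul_smul, smul_eq_C_mul, map_mul]
      push_cast
      simp only [map_ofNat]
      ring
    have hL2 : L ^ 2 ≠ 0 := pow_ne_zero _ hL
    have hai : ∃ i, a i ≠ 0 := by
      by_contra hcon
      push_neg at hcon
      apply hL
      have h1 : ((1 : ℕ) : ℂ) • L = 0 := by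
        rw [← euler_identity hL1]
        refine Finset.sum_eq_zero fun i _ => ?_
        rw [hLd i, show coeff 0 (pderiv i L) = 0 from hcon i, map_zero, mul_zero]
      simpa using h1
    obtain ⟨i0, hi0⟩ := hai
    have hk0 : (12 * c * a i0 * a i0 : ℂ) ≠ 0 := by
      apply mul_ne_zero (mul_ne_zero (mul_ne_zero (by norm_num) hc) hi0) hi0
    have hspan : Submodule.span ℂ (Set.range fun pr : Fin 3 × Fin 3 =>
          pderiv pr.1 (pderiv pr.2 (c • L ^ 4))) = Submodule.span ℂ {L ^ 2} := by
      apply le_antisymm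
      · rw [Submodule.span_le]
        rintro x ⟨pr, rfl⟩
        dsimp only
        rw [key pr]
        exact Submodule.smul_mem _ _ (Submodule.subset_span rfl)
      · rw [Submodule.span_le]
        rintro x hx
        rw [Set.mem_singleton_iff] at hx
        subst hx
        have hmem : (12 * c * a i0 * a i0) • L ^ 2 ∈ Submodule.span ℂ
            (Set.range fun pr : Fin 3 × Fin 3 => pderiv pr.1 (pderiv pr.2 (c • L ^ 4))) := by
          rw [← key (i0, i0)]
          exact Submodule.subset_span ⟨(i0, i0), rfl⟩
        have := Submodule.smul_mem _ (12 * c * a i0 * a i0 : ℂ)⁻¹ hmem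
        rwa [inv_smul_smul₀ hk0] at this
    rw [hspan]
    exact finrank_span_singleton hL2
  · intro h
    set T := Submodule.span ℂ (Set.range fun pr : Fin 3 × Fin 3 =>
      pderiv pr.1 (pderiv pr.2 F)) with hT
    obtain ⟨v, hv0, hv⟩ := finrank_eq_one_iff'.mp h
    set G : MvPolynomial (Fin 3) ℂ := (v : MvPolynomial (Fin 3) ℂ) with hGdef
    have hG : G ≠ 0 := fun h0 => hv0 (Subtype.ext h0)
    have hmemT : ∀ i j, pderiv i (pderiv j F) ∈ T := fun i j =>
      Submodule.subset_span ⟨(i, j), rfl⟩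
    have hcex : ∀ i j, ∃ k : ℂ, pderiv i (pderiv j F) = k • G := by
      intro i j
      obtain ⟨k, hk⟩ := hv ⟨_, hmemT i j⟩
      exact ⟨k, by simpa using congrArg Subtype.val hk.symm⟩
    choose c hcs using hcex
    have hTh : T ≤ homogeneousSubmodule (Fin 3) ℂ 2 := by
      rw [hT, Submodule.span_le]
      rintro x ⟨⟨i, j⟩, rfl⟩
      exact isHomogeneous_pderiv' (isHomogeneous_pderiv' hF j) i
    have hG2 : G.IsHomogeneous 2 := hTh v.2
    have csymm : ∀ i j, c i j = c j i := by
      intro i j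
      apply smul_left_injective ℂ hG
      show c i j • G = c j i • G
      rw [← hcs i j, ← hcs j i, pderiv_comm']
    set p : Fin 3 → MvPolynomial (Fin 3) ℂ := fun i => ∑ j, c i j • X j with hp
    have hdF : ∀ i, (pderiv i F).IsHomogeneous 3 := fun i => isHomogeneous_pderiv' hF i
    have step2 : ∀ i, (3 : ℂ) • pderiv i F = p i * G := by
      intro i
      have e := euler_identity (hdF i)
      push_cast at e
      rw [← e, hp]
      rw [Finset.sum_mul]
      refine Finset.sum_congr rfl fun j _ => ?_
      rw [hcs j i, csymm j i, smul_mul_assoc, mul_smul_comm]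
    have hpd : ∀ i k, pderiv k (p i) = C (c i k) := by
      intro i k
      rw [hp]
      simp only [map_sum, Derivation.map_smul, pderiv_X, smul_eq_C_mul]
      rw [Finset.sum_eq_single k]
      · simp
      · intro b _ hb
        simp [Pi.single_apply, Ne.symm hb]
      · simp
    have step4 : ∀ i k, p i * pderiv k G = (2 * c i k) • G := by
      intro i k
      have h1 := congrArg (pderiv k) (step2 i)
      rw [Derivation.map_smul, hcs k i, csymm k i, pderiv_mul, hpd i k] at h1
      simp only [smul_smul, smul_eq_C_mul, map_mul, map_ofNat] at h1 ⊢
      linear_combination -h1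
    set Q : MvPolynomial (Fin 3) ℂ := ∑ i, X i * p i with hQ
    have hQd : ∀ j, pderiv j Q = (2 : ℂ) • p j := by
      intro j
      rw [hQ, map_sum]
      have e1 : ∀ i, pderiv j (X i * p i) = pderiv j (X i) * p i + X i * C (c i j) := by
        intro i
        rw [pderiv_mul, hpd i j]
      simp only [e1]
      rw [Finset.sum_add_distrib]
      have e2 : ∑ i, pderiv j (X i) * p i = p j := by
        rw [Finset.sum_eq_single j]
        · simp
        · intro b _ hb
          simp [pderiv_X_of_ne hb]
        · simp
      have e3 : (∑ i, X i * C (c i j)) = p j := by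
        rw [hp]
        refine Finset.sum_congr rfl fun i _ => ?_
        rw [csymm j i, smul_eq_C_mul, mul_comm]
      rw [e2, e3, two_smul]
    have step5 : ∀ k, Q * pderiv k G = (2 : ℂ) • (p k * G) := by
      intro k
      calc Q * pderiv k G = ∑ i, X i * (p i * pderiv k G) := by
            rw [hQ, Finset.sum_mul]
            exact Finset.sum_congr rfl fun i _ => mul_assoc _ _ _
        _ = ∑ i, (2 * c i k) • (X i * G) := by
            refine Finset.sum_congr rfl fun i _ => ?_
            rw [step4 i k, mul_smul_comm]
        _ = (2 : ℂ) • (p k * G) := by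
            rw [hp, Finset.sum_mul, Finset.smul_sum]
            refine Finset.sum_congr rfl fun i _ => ?_
            rw [smul_mul_assoc, smul_smul, csymm k i]
    have step6 : ∀ j k, Q * pderiv j (pderiv k G) = (2 * c j k) • G := by
      intro j k
      have h1 := congrArg (pderiv j) (step5 k)
      rw [pderiv_mul, Derivation.map_smul, pderiv_mul, hQd j, hpd k j, csymm k j] at h1
      have h2 := step4 j k
      have h3 := step4 k j
      rw [csymm k j] at h3
      simp only [smul_smul, smul_eq_C_mul, map_mul, map_ofNat, smul_mul_assoc] at h1 h2 h3 ⊢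
      linear_combination h1 - 2 * h2 + 2 * h3
    have hb : ∀ j k, pderiv j (pderiv k G) = C (coeff 0 (pderiv j (pderiv k G))) := fun j k =>
      eq_C_of_isHomogeneous_zero (isHomogeneous_pderiv' (isHomogeneous_pderiv' hG2 k) j)
    have hcne : ∃ i j, c i j ≠ 0 := by
      by_contra hcc
      push_neg at hcc
      apply hv0
      have hle : T ≤ ⊥ := by
        rw [hT, Submodule.span_le]
        rintro x ⟨⟨i, j⟩, rfl⟩
        simp only [SetLike.mem_coe, Submodule.mem_bot]
        show pderiv i (pderiv j F) = 0
        rw [hcs i j, hcc i j, zero_smul]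
      exact Subtype.ext (by simpa using hle v.2)
    obtain ⟨i0, j0, hc0⟩ := hcne
    set β : ℂ := coeff 0 (pderiv i0 (pderiv j0 G)) with hβ
    have h60 : Q * C β = (2 * c i0 j0) • G := by
      rw [hβ, ← hb i0 j0]
      exact step6 i0 j0
    have h2c : (2 * c i0 j0 : ℂ) ≠ 0 := mul_ne_zero two_ne_zero hc0
    have hQne : Q ≠ 0 := by
      intro h0
      rw [h0, zero_mul] at h60
      exact hG (by simpa [smul_eq_zero, h2c] using h60.symm)
    have hβne : β ≠ 0 := by
      intro h0
      rw [h0, map_zero, mul_zero] at h60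
      exact hG (by simpa [smul_eq_zero, h2c] using h60.symm)
    set ν : ℂ := β / (2 * c i0 j0) with hν
    have hνne : ν ≠ 0 := div_ne_zero hβne h2c
    have hGQ : G = ν • Q := by
      apply smul_right_injective (MvPolynomial (Fin 3) ℂ) h2c
      show (2 * c i0 j0) • G = (2 * c i0 j0) • (ν • Q)
      rw [← h60, smul_smul, hν, mul_comm (2 * c i0 j0 : ℂ), div_mul_cancel₀ _ h2c,
        smul_eq_C_mul, mul_comm]
    have hgk : ∀ k, pderiv k G = (2 * ν) • p k := by
      intro k
      rw [hGQ, Derivation.map_smul, hQd k, smul_smul, mul_comm]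
    have h2ν : (2 * ν : ℂ) ≠ 0 := mul_ne_zero two_ne_zero hνne
    have hppQ : ∀ i k, p i * p k = c i k • Q := by
      intro i k
      have h4 := step4 i k
      rw [hgk k, hGQ, mul_smul_comm] at h4
      apply smul_right_injective (MvPolynomial (Fin 3) ℂ) h2ν
      show (2 * ν) • (p i * p k) = (2 * ν) • (c i k • Q)
      rw [h4, smul_smul, smul_smul]
      congr 1
      ring
    have hpne : p i0 ≠ 0 := by
      intro h0
      have hx := hppQ i0 j0
      rw [h0, zero_mul] at hx
      exact hQne (by simpa [smul_eq_zero, hc0] using hx.symm)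
    have hcii : c i0 i0 ≠ 0 := by
      intro h0
      have hx := hppQ i0 i0
      rw [h0, zero_smul] at hx
      exact hpne (mul_self_eq_zero.mp hx)
    have hQp : Q = (c i0 i0)⁻¹ • p i0 ^ 2 := by
      have hx := hppQ i0 i0
      rw [← sq] at hx
      rw [hx, smul_smul, inv_mul_cancel₀ hcii, one_smul]
    have hFQ : (12 : ℂ) • F = Q * G := by
      have e := euler_identity hF
      push_cast at e
      have h34 : ((12 : ℂ)) • F = (3 : ℂ) • ((4 : ℂ) • F) := by
        rw [smul_smul]; norm_num
      rw [h34, ← e, Finset.smul_sum, hQ, Finset.sum_mul]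
      refine Finset.sum_congr rfl fun i _ => ?_
      rw [← mul_smul_comm, step2 i, mul_assoc]
    have hQG : Q * G = ((c i0 i0)⁻¹ * (ν * (c i0 i0)⁻¹)) • (p i0 ^ 2 * p i0 ^ 2) := by
      rw [hGQ, hQp, smul_smul, smul_mul_assoc, mul_smul_comm, smul_smul]
    have hp4 : p i0 ^ 2 * p i0 ^ 2 = p i0 ^ 4 := by ring
    have hFfinal : F = (ν / (12 * (c i0 i0) ^ 2)) • p i0 ^ 4 := by
      have h12 : (12 : ℂ) ≠ 0 := by norm_num
      apply smul_right_injective (MvPolynomial (Fin 3) ℂ) h12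
      show (12 : ℂ) • F = (12 : ℂ) • ((ν / (12 * (c i0 i0) ^ 2)) • p i0 ^ 4)
      rw [hFQ, hQG, hp4, smul_smul]
      congr 1
      field_simp
    have hph : (p i0).IsHomogeneous 1 := by
      rw [hp]
      apply IsHomogeneous.sum
      intro j _
      rw [smul_eq_C_mul]
      exact isHomogeneous_C_mul_X _ _
    have hcν : (ν / (12 * (c i0 i0) ^ 2) : ℂ) ≠ 0 :=
      div_ne_zero hνne (mul_ne_zero (by norm_num) (pow_ne_zero _ hcii))
    exact ⟨_, p i0, hcν, hpne, hph, hFfinal⟩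
end
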